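/- Let T=(V,E) be a directed tree, let λ={λ_v}_{v∈V} be a sequence of positive real numbers, let 1 < p < ∞, and let q = p/(p−1). Assume the shift S : L^p(T,λ) → L^p(T,λ) is bounded. Under the identification of the dual of L^p(T,λ) with L^q(T,λ) via the pairing ⟨f,g⟩ = Σ_{v∈V} f(v) g(v) λ_v, the adjoint S* : L^q(T,λ) → L^q(T,λ) is given by (S* g)(u) = Σ_{v∈child(u)} g(v) λ_v/λ_u for each g ∈ L^q(T,λ) and each u ∈ V. -/

import Mathlib

open Filter

attribute [local instance] Classical.propDecidable
open scoped ENNReal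

/-- A directed tree: a locally finite directed graph on a (countably infinite)
vertex set with no directed circuits, whose underlying undirected graph is
connected, and in which every vertex has indegree at most one. -/
structure DirTree (V : Type) where
  E : V → V → Prop
  finIn : ∀ v : V, {u : V | E u v}.Finite
  finOut : ∀ v : V, {u : V | E v u}.Finite
  noCircuit : ∀ (n : ℕ) (c : Fin (n + 1) → V), Function.Injective c →
    (∀ i : Fin n, E (c i.castSucc) (c i.succ)) → ¬ E (c (Fin.last n)) (c 0)
  conn : (SimpleGraph.fromRel E).Connected
  indeg : ∀ ⦃u w v : V⦄, E u v → E w v → u = w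

namespace DirTree

variable {V : Type} (T : DirTree V)

/-- A root is a vertex of indegree zero. -/
def IsRoot (r : V) : Prop := ∀ u : V, ¬ T.E u r

/-- The set of children of a vertex. -/
def child (u : V) : Set V := {v : V | T.E u v}

/-- A leaf is a vertex of outdegree zero. -/
def IsLeaf (u : V) : Prop := ¬ (T.child u).Nonempty

/-- The (forward) shift `(S f)(v) = f (parent v)`, with `(S f)(root) = 0`. -/
noncomputable def shift (f : V → ℂ) (v : V) : ℂ :=
  if h : ∃ u : V, T.E u v then f h.choose else 0

/-- The backward shift `(B f)(u) = ∑_{v ∈ child u} f v`. -/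
noncomputable def bwd (f : V → ℂ) (u : V) : ℂ :=
  ∑' v : T.child u, f v.1

/-- The operator `(S* g)(u) = ∑_{v ∈ child u} g v · λ_v / λ_u`. -/
noncomputable def sstar (lam : V → ℝ) (g : V → ℂ) (u : V) : ℂ :=
  ∑' v : T.child u, g v.1 * ((lam v.1 / lam u : ℝ) : ℂ)

/-- `childN n u` is the set of vertices `v` with `parentⁿ v = u`. -/
def childN (T : DirTree V) : ℕ → V → Set V
  | 0, u => {u}
  | n + 1, u => {w : V | ∃ v ∈ T.child u, w ∈ childN T n v}

/-- `γ(u,n)`, the cardinality of `childN n u`. -/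
noncomputable def gam (u : V) (n : ℕ) : ℕ := (T.childN n u).ncard

/-- The `n`-th ancestor `parentⁿ u` of `u` (junk value `u` if it does not exist). -/
noncomputable def anc (u : V) (n : ℕ) : V :=
  if h : ∃ w : V, u ∈ T.childN n w then h.choose else u

/-- A leafless directed tree has a free end if some vertex is such that all of
its descendants have outdegree one. -/
def FreeEnd : Prop :=
  ∃ w : V, ∀ n : ℕ, 0 < n → ∀ v ∈ T.childN n w, (T.child v).ncard = 1

end DirTree

/-- Membership in the weighted space `L^p(T,λ)`. -/
def MemLp' {V : Type} (lam : V → ℝ) (p : ℝ) (f : V → ℂ) : Prop :=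
  Summable (fun v => ‖f v‖ ^ p * lam v)

/-- The norm of the weighted space `L^p(T,λ)`. -/
noncomputable def pNorm {V : Type} (lam : V → ℝ) (p : ℝ) (f : V → ℂ) : ℝ :=
  (∑' v, ‖f v‖ ^ p * lam v) ^ (1 / p)

/-- Boundedness of an operator on `L^p(T,λ)`. -/
def BoundedOn {V : Type} (lam : V → ℝ) (p : ℝ) (A : (V → ℂ) → (V → ℂ)) : Prop :=
  ∃ C : ℝ, 0 ≤ C ∧ ∀ f : V → ℂ, MemLp' lam p f →
    MemLp' lam p (A f) ∧ pNorm lam p (A f) ≤ C * pNorm lam p f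

/-- Hypercyclicity of an operator on `L^p(T,λ)`: some `f ∈ L^p(T,λ)` has dense
orbit `{Aⁿ f : n ∈ ℕ}`. -/
def Hypercyclic {V : Type} (lam : V → ℝ) (p : ℝ) (A : (V → ℂ) → (V → ℂ)) : Prop :=
  ∃ f : V → ℂ, MemLp' lam p f ∧ ∀ g : V → ℂ, MemLp' lam p g → ∀ ε : ℝ, 0 < ε →
    ∃ n : ℕ, MemLp' lam p (A^[n] f - g) ∧ pNorm lam p (A^[n] f - g) < ε

section StmtThreeAux

variable {V : Type}

/-- tsum over a finite set equals the finite sum. -/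
lemma tsum_set_finite_eq_sum {M : Type*} [AddCommMonoid M] [TopologicalSpace M] [T2Space M]
    {s : Set V} (hs : s.Finite) (f : V → M) :
    ∑' x : s, f x = ∑ x ∈ hs.toFinset, f x := by
  rw [tsum_subtype]
  rw [tsum_eq_sum (s := hs.toFinset)
    (fun b hb => Set.indicator_of_notMem (by simpa using hb) f)]
  exact Finset.sum_congr rfl fun x hx => Set.indicator_of_mem (by simpa using hx) f

lemma DirTree.shift_eq (T : DirTree V) (f : V → ℂ) {u v : V} (hE : T.E u v) :
    T.shift f v = f u := by
  have hex : ∃ w, T.E w v := ⟨u, hE⟩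
  rw [DirTree.shift, dif_pos hex, T.indeg hex.choose_spec hE]

lemma DirTree.shift_eq_zero (T : DirTree V) (f : V → ℂ) {v : V} (h : ¬ ∃ w, T.E w v) :
    T.shift f v = 0 := by
  rw [DirTree.shift, dif_neg h]

lemma DirTree.childSigma_injective (T : DirTree V) :
    Function.Injective (fun x : Σ u : V, T.child u => (x.2 : V)) := by
  rintro ⟨u, v, hv⟩ ⟨u', v', hv'⟩ h
  simp only at h
  subst h
  have : u = u' := T.indeg hv hv'
  subst this
  rfl

end StmtThreeAux

/-- For `1 < p < ∞`, `q = p/(p-1)` and bounded shift `S` on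
`L^p(T,λ)`, the adjoint of `S` under the pairing `⟨f,g⟩ = ∑ f(v) g(v) λ_v` is
the operator `(S* g)(u) = ∑_{v ∈ child u} g(v) λ_v/λ_u`, which maps `L^q(T,λ)`
to itself. -/
theorem stmt_3 {V : Type} [Countable V] [Infinite V] (T : DirTree V)
    (lam : V → ℝ) (hlam : ∀ v : V, 0 < lam v) (p q : ℝ) (hp : 1 < p)
    (hq : q = p / (p - 1)) (hb : BoundedOn lam p T.shift) :
    ∀ g : V → ℂ, MemLp' lam q g →
      MemLp' lam q (T.sstar lam g) ∧
      ∀ f : V → ℂ, MemLp' lam p f →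
        (∑' v : V, T.shift f v * g v * (lam v : ℂ)) =
          ∑' u : V, f u * T.sstar lam g u * (lam u : ℂ) := by
  intro g hg
  obtain ⟨C, hC0, hC⟩ := hb
  have hpq : p.HolderConjugate q := hq ▸ Real.HolderConjugate.conjExponent hp
  have hp0 : (0:ℝ) < p := hpq.pos
  have hq0 : (0:ℝ) < q := hpq.symm.pos
  have hfin : ∀ u : V, (T.child u).Finite := T.finOut
  haveI hfint : ∀ u : V, Finite (T.child u) := fun u => (hfin u).to_subtype
  -- Step A : sum of weights over children is bounded
  have hA : ∀ u : V, (∑' v : T.child u, lam v) ≤ C ^ p * lam u := by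
    intro u
    set δ : V → ℂ := fun v => if v = u then 1 else 0 with hδ
    have hδmem : MemLp' lam p δ := by
      apply summable_of_ne_finset_zero (s := ({u} : Finset V))
      intro v hv
      simp only [Finset.mem_singleton] at hv
      simp [δ, hv, Real.zero_rpow hp0.ne']
    obtain ⟨hmem, hnorm⟩ := hC δ hδmem
    have hshift : ∀ v, ‖T.shift δ v‖ ^ p * lam v = Set.indicator (T.child u) lam v := by
      intro v
      by_cases hE : T.E u v
      · rw [T.shift_eq δ hE, Set.indicator_of_mem (show v ∈ T.child u from hE)]
        simp [δ, Real.one_rpow]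
      · rw [Set.indicator_of_notMem (show v ∉ T.child u from hE)]
        by_cases hex : ∃ w, T.E w v
        · have hne : hex.choose ≠ u := fun h => hE (h ▸ hex.choose_spec)
          rw [DirTree.shift, dif_pos hex]
          simp [δ, hne, Real.zero_rpow hp0.ne']
        · rw [T.shift_eq_zero δ hex]
          simp [Real.zero_rpow hp0.ne']
    have h1 : (∑' v, ‖T.shift δ v‖ ^ p * lam v) = ∑' v : T.child u, lam v := by
      rw [tsum_subtype]
      exact tsum_congr hshift
    have h2 : (∑' v, ‖δ v‖ ^ p * lam v) = lam u := by
      rw [tsum_eq_sum (s := ({u} : Finset V)) ?_]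
      · simp [δ, Real.one_rpow]
      · intro v hv
        simp only [Finset.mem_singleton] at hv
        simp [δ, hv, Real.zero_rpow hp0.ne']
    rw [pNorm, pNorm, h1, h2] at hnorm
    have hAnn : 0 ≤ (∑' v : T.child u, lam v) := tsum_nonneg (fun v => (hlam _).le)
    have hlu : 0 ≤ lam u := (hlam u).le
    calc (∑' v : T.child u, lam v)
        = ((∑' v : T.child u, lam v) ^ (1/p)) ^ p := by
          rw [one_div, Real.rpow_inv_rpow hAnn hp0.ne']
      _ ≤ (C * lam u ^ (1/p)) ^ p := by
          apply Real.rpow_le_rpow (Real.rpow_nonneg hAnn _) hnorm hp0.le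
      _ = C ^ p * lam u := by
          rw [Real.mul_rpow hC0 (Real.rpow_nonneg hlu _), one_div,
            Real.rpow_inv_rpow hlu hp0.ne']
  -- disjointness of children sets : summability of fiberwise sums
  have hGsig : Summable (fun x : Σ u : V, T.child u => ‖g (x.2 : V)‖ ^ q * lam (x.2 : V)) :=
    hg.comp_injective T.childSigma_injective
  have hB : Summable (fun u : V => ∑' v : T.child u, ‖g (v : V)‖ ^ q * lam (v : V)) :=
    hGsig.sigma
  -- Step B : pointwise estimate for sstar
  have hpoint : ∀ u : V, ‖T.sstar lam g u‖ ^ q * lam u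
      ≤ C ^ q * ∑' v : T.child u, ‖g (v : V)‖ ^ q * lam (v : V) := by
    intro u
    set Bu := ∑' v : T.child u, ‖g (v : V)‖ ^ q * lam (v : V) with hBu
    have hBu0 : 0 ≤ Bu := tsum_nonneg fun v => mul_nonneg (Real.rpow_nonneg (norm_nonneg _) _) (hlam _).le
    set D := ∑' v : T.child u, lam (v : V) with hD
    have hD0 : 0 ≤ D := tsum_nonneg fun v => (hlam _).le
    have hL : 0 < lam u := hlam u
    -- bound the norm of sstar
    have h1 : ‖T.sstar lam g u‖ ≤ ∑' v : T.child u, ‖g (v : V)‖ * (lam (v : V) / lam u) := by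
      refine le_trans (norm_tsum_le_tsum_norm (Summable.of_finite)) (le_of_eq (tsum_congr fun v => ?_))
      rw [norm_mul, Complex.norm_real, Real.norm_of_nonneg (div_nonneg (hlam _).le hL.le)]
    have h2 : (∑' v : T.child u, ‖g (v : V)‖ * (lam (v : V) / lam u))
        = (∑' v : T.child u, ‖g (v : V)‖ * lam (v : V)) / lam u := by
      rw [← tsum_div_const]
      exact tsum_congr fun v => by rw [mul_div_assoc]
    have holder : (∑' v : T.child u, ‖g (v : V)‖ * lam (v : V))
        ≤ Bu ^ (1/q) * D ^ (1/p) := by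
      have key := Real.inner_le_Lp_mul_Lq_tsum_of_nonneg (ι := T.child u) hpq.symm
        (f := fun v => ‖g (v : V)‖ * lam (v : V) ^ (1/q))
        (g := fun v => lam (v : V) ^ (1/p))
        (fun v => mul_nonneg (norm_nonneg _) (Real.rpow_nonneg (hlam _).le _))
        (fun v => Real.rpow_nonneg (hlam _).le _)
        Summable.of_finite Summable.of_finite
      have e1 : ∀ v : T.child u, (‖g (v : V)‖ * lam (v : V) ^ (1/q)) * lam (v : V) ^ (1/p)
          = ‖g (v : V)‖ * lam (v : V) := by
        intro v
        rw [mul_assoc, ← Real.rpow_add (hlam _)]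
        rw [show 1/q + 1/p = 1 by rw [one_div, one_div, add_comm]; exact hpq.inv_add_inv_eq_one]
        rw [Real.rpow_one]
      have e2 : ∀ v : T.child u, ((‖g (v : V)‖ * lam (v : V) ^ (1/q)) ^ q)
          = ‖g (v : V)‖ ^ q * lam (v : V) := by
        intro v
        rw [Real.mul_rpow (norm_nonneg _) (Real.rpow_nonneg (hlam _).le _), one_div,
          Real.rpow_inv_rpow (hlam _).le hq0.ne']
      have e3 : ∀ v : T.child u, ((lam (v : V) ^ (1/p)) ^ p) = lam (v : V) := by
        intro v
        rw [one_div, Real.rpow_inv_rpow (hlam _).le hp0.ne']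
      calc (∑' v : T.child u, ‖g (v : V)‖ * lam (v : V))
          = ∑' v : T.child u, (‖g (v : V)‖ * lam (v : V) ^ (1/q)) * lam (v : V) ^ (1/p) :=
            (tsum_congr e1).symm
        _ ≤ (∑' v : T.child u, (‖g (v : V)‖ * lam (v : V) ^ (1/q)) ^ q) ^ (1/q)
            * (∑' v : T.child u, (lam (v : V) ^ (1/p)) ^ p) ^ (1/p) := key
        _ = Bu ^ (1/q) * D ^ (1/p) := by rw [tsum_congr e2, tsum_congr e3]
    have hDle : D ^ (q/p) ≤ (C ^ p * lam u) ^ (q/p) :=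
      Real.rpow_le_rpow hD0 (hA u) (div_nonneg hq0.le hp0.le)
    have hnorm_le : ‖T.sstar lam g u‖ ≤ Bu ^ (1/q) * D ^ (1/p) / lam u := by
      refine le_trans h1 ?_
      rw [h2]
      gcongr
    have hqp : q / p = q - 1 := hpq.symm.div_conj_eq_sub_one
    have hpqp : p * (q / p) = q := by field_simp
    calc ‖T.sstar lam g u‖ ^ q * lam u
        ≤ (Bu ^ (1/q) * D ^ (1/p) / lam u) ^ q * lam u := by
          have := Real.rpow_le_rpow (norm_nonneg _) hnorm_le hq0.le
          exact mul_le_mul_of_nonneg_right this hL.le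
      _ = Bu * D ^ (q/p) / lam u ^ q * lam u := by
          rw [Real.div_rpow (mul_nonneg (Real.rpow_nonneg hBu0 _) (Real.rpow_nonneg hD0 _)) hL.le,
            Real.mul_rpow (Real.rpow_nonneg hBu0 _) (Real.rpow_nonneg hD0 _),
            one_div, Real.rpow_inv_rpow hBu0 hq0.ne', ← Real.rpow_mul hD0,
            one_div, inv_mul_eq_div]
      _ ≤ Bu * (C ^ p * lam u) ^ (q/p) / lam u ^ q * lam u := by gcongr
      _ = C ^ q * Bu := by
          rw [Real.mul_rpow (Real.rpow_nonneg hC0 _) hL.le, ← Real.rpow_mul hC0, hpqp, hqp]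
          have h2' : lam u ^ (q - 1) = lam u ^ q / lam u := by
            rw [Real.rpow_sub hL, Real.rpow_one]
          rw [h2']
          have h3 : lam u ^ q ≠ 0 := (Real.rpow_pos_of_pos hL q).ne'
          field_simp
  have hmemq : MemLp' lam q (T.sstar lam g) :=
    Summable.of_nonneg_of_le
      (fun u => mul_nonneg (Real.rpow_nonneg (norm_nonneg _) _) (hlam _).le)
      hpoint (hB.mul_left (C ^ q))
  refine ⟨hmemq, ?_⟩
  intro f hf
  obtain ⟨hSf, -⟩ := hC f hf
  have hs1 : Summable (fun v => ‖T.shift f v‖ * ‖g v‖ * lam v) := by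
    have key := Real.summable_mul_of_Lp_Lq_of_nonneg (ι := V) hpq
      (f := fun v => ‖T.shift f v‖ * lam v ^ (1/p))
      (g := fun v => ‖g v‖ * lam v ^ (1/q))
      (fun v => mul_nonneg (norm_nonneg _) (Real.rpow_nonneg (hlam _).le _))
      (fun v => mul_nonneg (norm_nonneg _) (Real.rpow_nonneg (hlam _).le _))
      (hSf.congr fun v => Eq.symm (by
        rw [Real.mul_rpow (norm_nonneg _) (Real.rpow_nonneg (hlam _).le _), one_div,
          Real.rpow_inv_rpow (hlam _).le hp0.ne']))
      (hg.congr fun v => Eq.symm (by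
        rw [Real.mul_rpow (norm_nonneg _) (Real.rpow_nonneg (hlam _).le _), one_div,
          Real.rpow_inv_rpow (hlam _).le hq0.ne']))
    refine key.congr fun v => ?_
    rw [mul_mul_mul_comm, ← Real.rpow_add (hlam _),
      show 1/p + 1/q = 1 by rw [one_div, one_div]; exact hpq.inv_add_inv_eq_one, Real.rpow_one]
  have hφ : Summable (fun v => T.shift f v * g v * ((lam v : ℝ) : ℂ)) := by
    apply Summable.of_norm
    refine hs1.congr fun v => Eq.symm ?_
    rw [norm_mul, norm_mul, Complex.norm_real, Real.norm_of_nonneg (hlam _).le]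
  have hψ : Summable (fun x : Σ u : V, T.child u =>
      f x.1 * g (x.2 : V) * ((lam (x.2 : V) : ℝ) : ℂ)) := by
    have h' := hφ.comp_injective T.childSigma_injective
    refine h'.congr fun x => ?_
    simp only [Function.comp_apply]
    rw [T.shift_eq f x.2.2]
  have hsupp : Function.support (fun v => T.shift f v * g v * ((lam v : ℝ) : ℂ))
      ⊆ Set.range (fun x : Σ u : V, T.child u => (x.2 : V)) := by
    intro v hv
    by_contra hr
    apply hv
    have hnex : ¬ ∃ w, T.E w v := by
      rintro ⟨w, hw⟩
      exact hr ⟨⟨w, ⟨v, hw⟩⟩, rfl⟩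
    simp [T.shift_eq_zero f hnex]
  have hLid : (∑' v : V, T.shift f v * g v * ((lam v : ℝ) : ℂ))
      = ∑' x : Σ u : V, T.child u, f x.1 * g (x.2 : V) * ((lam (x.2 : V) : ℝ) : ℂ) := by
    rw [← Function.Injective.tsum_eq T.childSigma_injective hsupp]
    exact tsum_congr fun x => by rw [T.shift_eq f x.2.2]
  rw [hLid, hψ.tsum_sigma]
  refine tsum_congr fun u => ?_
  have h0 : ((lam u : ℝ) : ℂ) ≠ 0 := by exact_mod_cast (hlam u).ne'
  have hr : f u * T.sstar lam g u * ((lam u : ℝ) : ℂ)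
      = ∑' v : T.child u, f u * (g (v : V) * (((lam (v : V) / lam u : ℝ)) : ℂ) * ((lam u : ℝ) : ℂ)) := by
    unfold DirTree.sstar
    rw [mul_assoc, ← tsum_mul_right, ← tsum_mul_left]
  rw [hr]
  refine tsum_congr fun v => ?_
  push_cast
  field_simp
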